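/- For any p ≥ 1 and positive integer u, u^p + Σ_{t>u} (t^p − (t−1)^p)·(u/t)^{p+1} ≤ (p+1)·u^p. -/

import Mathlib

open Finset

-- telescoping: sum over Ioc u N of (1/(t-1) - 1/t) = 1/u - 1/N
lemma telescope_Ioc (u N : ℕ) (hu : 0 < u) (h : u ≤ N) :
    ∑ t ∈ Finset.Ioc u N, ((1 : ℝ) / ((t : ℝ) - 1) - 1 / t) = 1 / u - 1 / N := by
  induction N, h using Nat.le_induction with
  | base => simp
  | succ N hN ih =>
    rw [Finset.sum_Ioc_succ_top (by omega), ih]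
    push_cast
    have h1 : ((N:ℝ) + 1 - 1) = N := by ring
    rw [h1]
    ring

theorem lp_norm_extreme_point_bound (p : ℝ) (hp : 1 ≤ p) (u : ℕ) (hu : 0 < u) :
    (u : ℝ) ^ p + ∑' t : {t : ℕ // u < t},
        ((((t : ℕ) : ℝ)) ^ p - (((t : ℕ) : ℝ) - 1) ^ p) * ((u : ℝ) / ((t : ℕ) : ℝ)) ^ (p + 1) ≤
      (p + 1) * (u : ℝ) ^ p := by
  set f : {t : ℕ // u < t} → ℝ := fun t =>
    ((((t : ℕ) : ℝ)) ^ p - (((t : ℕ) : ℝ) - 1) ^ p) * ((u : ℝ) / ((t : ℕ) : ℝ)) ^ (p + 1) with hf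
  set g : {t : ℕ // u < t} → ℝ := fun t =>
    p * (u : ℝ) ^ (p + 1) * (1 / (((t : ℕ) : ℝ) - 1) - 1 / ((t : ℕ) : ℝ)) with hg
  have hu0 : (0:ℝ) < u := by exact_mod_cast hu
  have hfg : ∀ t, f t ≤ g t := by
    intro ⟨t, ht⟩
    have ht1 : (1:ℝ) ≤ (t:ℝ) - 1 := by
      have : 2 ≤ t := by omega
      have : (2:ℝ) ≤ t := by exact_mod_cast this
      linarith
    have ht0 : (0:ℝ) < t := by linarith
    simp only [hf, hg]
    -- key: t^p - (t-1)^p ≤ p * t^p / t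
    have key : ((t:ℝ)) ^ p - ((t:ℝ) - 1) ^ p ≤ p * ((t:ℝ)) ^ p / t := by
      have hber : 1 + p * (-(1 / (t:ℝ))) ≤ (1 + (-(1/(t:ℝ)))) ^ p :=
        one_add_mul_self_le_rpow_one_add (by
          rw [neg_le, neg_neg]; rw [div_le_one ht0]; linarith) hp
      have hbase : (0:ℝ) ≤ 1 + (-(1/(t:ℝ))) := by
        have : 1/(t:ℝ) ≤ 1 := by rw [div_le_one ht0]; linarith
        linarith
      have harg : (t:ℝ) - 1 = (t:ℝ) * (1 + (-(1/(t:ℝ)))) := by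
        field_simp
        ring
      have heq : ((t:ℝ) - 1) ^ p = (t:ℝ) ^ p * (1 + (-(1/(t:ℝ)))) ^ p := by
        rw [harg, Real.mul_rpow (le_of_lt ht0) hbase]
      rw [heq]
      have h2 : (t:ℝ) ^ p * (1 - p / t) ≤ (t:ℝ) ^ p * (1 + (-(1/(t:ℝ)))) ^ p := by
        apply mul_le_mul_of_nonneg_left _ (Real.rpow_nonneg (le_of_lt ht0) p)
        calc 1 - p / t = 1 + p * (-(1/(t:ℝ))) := by ring
          _ ≤ _ := hber
      have : (t:ℝ) ^ p - (t:ℝ) ^ p * (1 - p / t) = p * (t:ℝ) ^ p / t := by ring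
      linarith
    -- (u/t)^(p+1) = u^(p+1) / t^(p+1)
    have hdiv : ((u:ℝ) / t) ^ (p+1) = (u:ℝ) ^ (p+1) / (t:ℝ) ^ (p+1) :=
      Real.div_rpow (le_of_lt hu0) (le_of_lt ht0) (p+1)
    have htp : (t:ℝ) ^ (p + 1) = (t:ℝ) ^ p * t := by
      rw [Real.rpow_add ht0, Real.rpow_one]
    have hpos : (0:ℝ) < ((u:ℝ)/t) ^ (p+1) := Real.rpow_pos_of_pos (by positivity) _
    calc (((t:ℝ)) ^ p - ((t:ℝ) - 1) ^ p) * ((u:ℝ)/t) ^ (p+1)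
        ≤ (p * ((t:ℝ)) ^ p / t) * ((u:ℝ)/t) ^ (p+1) := by
          apply mul_le_mul_of_nonneg_right key (le_of_lt hpos)
      _ = p * (u:ℝ)^(p+1) * (1 / ((t:ℝ) * t)) := by
          rw [hdiv, htp]
          have h1 : (t:ℝ) ≠ 0 := ne_of_gt ht0
          have h2 : (t:ℝ) ^ p ≠ 0 := ne_of_gt (Real.rpow_pos_of_pos ht0 p)
          field_simp
      _ ≤ p * (u:ℝ)^(p+1) * (1 / (((t:ℝ)-1) * t)) := by
          apply mul_le_mul_of_nonneg_left _ (by positivity)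
          apply div_le_div_of_nonneg_left one_pos.le (by nlinarith) (by nlinarith)
      _ = p * (u : ℝ) ^ (p + 1) * (1 / (((t:ℝ)) - 1) - 1 / (t:ℝ)) := by
          congr 1
          field_simp
          ring
  have hf0 : ∀ t, 0 ≤ f t := by
    intro ⟨t, ht⟩
    have ht1 : (1:ℝ) ≤ (t:ℝ) := by exact_mod_cast Nat.one_le_iff_ne_zero.mpr (by omega)
    have hsub : (0:ℝ) ≤ ((t:ℝ)) ^ p - ((t:ℝ) - 1) ^ p := by
      have := Real.rpow_le_rpow (by linarith) (by linarith : (t:ℝ) - 1 ≤ t) (by linarith)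
      linarith
    exact mul_nonneg hsub (Real.rpow_nonneg (by positivity) _)
  -- partial sums of f bounded by p * u^p
  have hbound : ∀ s : Finset {t : ℕ // u < t}, ∑ t ∈ s, f t ≤ p * (u:ℝ) ^ p := by
    intro s
    rcases s.eq_empty_or_nonempty with rfl | hs
    · simp; positivity
    have h1 : ∑ t ∈ s, f t ≤ ∑ t ∈ s, g t := Finset.sum_le_sum fun t _ => hfg t
    -- bound sum of g over s
    set N := Finset.sup s (fun t => (t : ℕ)) with hN
    have hsN : ∀ t ∈ s, (t : ℕ) ∈ Finset.Ioc u N := by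
      intro t ht
      exact Finset.mem_Ioc.mpr ⟨t.2, Finset.le_sup ht⟩
    have hinj : Set.InjOn (fun t : {t : ℕ // u < t} => (t : ℕ)) s := by
      intro a _ b _ hab; exact Subtype.ext hab
    have h2 : ∑ t ∈ s, g t ≤ ∑ k ∈ Finset.Ioc u N, p * (u:ℝ)^(p+1) * (1/((k:ℝ)-1) - 1/k) := by
      rw [← Finset.sum_image (f := fun k : ℕ => p * (u:ℝ)^(p+1) * (1/((k:ℝ)-1) - 1/k))
        (by intro a ha b hb hab; exact hinj ha hb hab)]
      apply Finset.sum_le_sum_of_subset_of_nonneg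
      · intro k hk
        obtain ⟨t, ht, rfl⟩ := Finset.mem_image.mp hk
        exact hsN t ht
      · intro k hk _
        have hk2 : 2 ≤ k := by
          have := Finset.mem_Ioc.mp hk
          omega
        have : (2:ℝ) ≤ k := by exact_mod_cast hk2
        have : 1/(k:ℝ) ≤ 1/((k:ℝ)-1) := by
          apply div_le_div_of_nonneg_left one_pos.le (by linarith) (by linarith)
        apply mul_nonneg (by positivity)
        linarith
    have hNu : u ≤ N := by
      obtain ⟨t, ht⟩ := hs
      exact le_of_lt (lt_of_lt_of_le t.2 (Finset.le_sup ht))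
    have h3 : ∑ k ∈ Finset.Ioc u N, p * (u:ℝ)^(p+1) * (1/((k:ℝ)-1) - 1/k)
        = p * (u:ℝ)^(p+1) * (1/(u:ℝ) - 1/(N:ℝ)) := by
      rw [← Finset.mul_sum, telescope_Ioc u N hu hNu]
    have hN0 : (0:ℝ) ≤ 1 / (N:ℝ) := by positivity
    have h4 : p * (u:ℝ)^(p+1) * (1/(u:ℝ) - 1/(N:ℝ)) ≤ p * (u:ℝ)^(p+1) * (1/(u:ℝ)) := by
      apply mul_le_mul_of_nonneg_left _ (by positivity)
      linarith
    have h5 : p * (u:ℝ)^(p+1) * (1/(u:ℝ)) = p * (u:ℝ)^p := by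
      rw [Real.rpow_add hu0, Real.rpow_one]
      field_simp
    linarith [h1, h2]
  have hsummable : Summable f := summable_of_sum_le hf0 hbound
  have htsum : ∑' t, f t ≤ p * (u:ℝ) ^ p := Summable.tsum_le_of_sum_le hsummable hbound
  have : (u:ℝ) ^ p + ∑' t, f t ≤ (u:ℝ)^p + p * (u:ℝ)^p := by linarith
  calc (u : ℝ) ^ p + ∑' t, f t ≤ (u:ℝ)^p + p * (u:ℝ)^p := this
    _ = (p + 1) * (u:ℝ)^p := by ring
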